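/- Let A be an invertible N×N real matrix, b ∈ ℝ^N, and f(x) = A x − b. Suppose x₀ ∈ ℝ^N, and let x₁, x₂, … be generated from x₀ by the full-memory NKA iteration for f. Let x_j^G denote the j-th GMRES iterate for A x = b with starting point x₀ and r_j^G = A x_j^G − b its residual. If for some n > 0 we have r_{n−1}^G ≠ 0 and ‖r_j^G‖₂ < ‖r_{j−1}^G‖₂ for all 0 < j < n, then the (n+1)-st NKA iterate satisfies x_{n+1} = (I − A) x_n^G + b. -/

import Mathlib

open Submodule Module Set

section WalkerNiAux

variable {E : Type*} [NormedAddCommGroup E] [NormedSpace ℝ E]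

/-- The Krylov space of order `j`. -/
abbrev kry (A : E →L[ℝ] E) (r : E) (j : ℕ) : Submodule ℝ E :=
  Submodule.span ℝ (Set.range fun k : Fin j => (A ^ k.1) r)

lemma kry_mono (A : E →L[ℝ] E) (r : E) {i j : ℕ} (h : i ≤ j) : kry A r i ≤ kry A r j := by
  apply Submodule.span_mono
  rintro _ ⟨k, rfl⟩
  exact ⟨⟨k.1, lt_of_lt_of_le k.2 h⟩, rfl⟩

lemma r_mem_kry (A : E →L[ℝ] E) (r : E) (j : ℕ) : r ∈ kry A r (j + 1) := by
  apply Submodule.subset_span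
  exact ⟨⟨0, j.succ_pos⟩, by simp⟩

lemma kry_succ_sup_map (A : E →L[ℝ] E) (r : E) (m : ℕ) :
    kry A r (m + 1) = Submodule.span ℝ {r} ⊔ (kry A r m).map (A : E →ₗ[ℝ] E) := by
  apply le_antisymm
  · rw [Submodule.span_le]
    rintro _ ⟨⟨k, hk⟩, rfl⟩
    cases k with
    | zero =>
      simp only [pow_zero, ContinuousLinearMap.one_apply]
      exact Submodule.mem_sup_left (Submodule.mem_span_singleton_self r)
    | succ j =>
      have hj : j < m := by omega
      have : (A ^ (j + 1)) r = A ((A ^ j) r) := by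
        rw [pow_succ']; rfl
      simp only [this]
      exact Submodule.mem_sup_right
        (Submodule.mem_map_of_mem (Submodule.subset_span ⟨⟨j, hj⟩, rfl⟩))
  · apply sup_le
    · rw [Submodule.span_le, Set.singleton_subset_iff]
      exact r_mem_kry A r m
    · rw [Submodule.map_span, Submodule.span_le]
      rintro _ ⟨_, ⟨k, rfl⟩, rfl⟩
      apply Submodule.subset_span
      refine ⟨⟨k.1 + 1, by omega⟩, ?_⟩
      show (A ^ (k.1 + 1)) r = A ((A ^ k.1) r)
      rw [pow_succ']; rfl

lemma apply_mem_kry (A : E →L[ℝ] E) (r : E) (m : ℕ) {u : E} (hu : u ∈ kry A r m) :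
    A u ∈ kry A r (m + 1) := by
  rw [kry_succ_sup_map]
  exact Submodule.mem_sup_right (Submodule.mem_map_of_mem hu)

lemma kry_succ_sup_last (A : E →L[ℝ] E) (r : E) (m : ℕ) :
    kry A r (m + 1) = kry A r m ⊔ Submodule.span ℝ {(A ^ m) r} := by
  apply le_antisymm
  · rw [Submodule.span_le]
    rintro _ ⟨⟨k, hk⟩, rfl⟩
    by_cases h : k < m
    · exact Submodule.mem_sup_left (Submodule.subset_span ⟨⟨k, h⟩, rfl⟩)
    · have : k = m := by omega
      subst this
      exact Submodule.mem_sup_right (Submodule.mem_span_singleton_self _)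
  · apply sup_le
    · exact kry_mono A r (Nat.le_succ m)
    · rw [Submodule.span_le, Set.singleton_subset_iff]
      exact Submodule.subset_span ⟨⟨m, lt_add_one m⟩, rfl⟩

lemma finrank_span_singleton_le' (a : E) :
    Module.finrank ℝ (Submodule.span ℝ {a} : Submodule ℝ E) ≤ 1 := by
  by_cases h : a = 0
  · subst h
    rw [Submodule.span_zero_singleton]
    simp
  · rw [finrank_span_singleton h]

variable {F : Type*} [NormedAddCommGroup F] [InnerProductSpace ℝ F]

/-- Uniqueness of a norm minimizer over a convex set via the parallelogram law. -/
lemma norm_min_unique {a a' : F} (h : ‖a‖ = ‖a'‖) (hmid : 2 * ‖a‖ ≤ ‖a + a'‖) : a = a' := by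
  have hp := parallelogram_law_with_norm ℝ a a'
  have h0 : ‖a - a'‖ = 0 := by
    nlinarith [norm_nonneg (a - a'), norm_nonneg (a + a'), norm_nonneg a]
  exact sub_eq_zero.mp (norm_eq_zero.mp h0)

end WalkerNiAux

theorem stmt_0 (N : ℕ)
    (A : EuclideanSpace ℝ (Fin N) →L[ℝ] EuclideanSpace ℝ (Fin N))
    (hA : Function.Bijective ⇑A)
    (b : EuclideanSpace ℝ (Fin N))
    (x : ℕ → EuclideanSpace ℝ (Fin N))
    (z : (i : ℕ) → Fin i → ℝ)
    (hx1 : x 1 = x 0 - (A (x 0) - b))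
    (hmin : ∀ i : ℕ, 1 ≤ i → ∀ y : Fin i → ℝ,
      ‖(A (x i) - b) - ∑ j : Fin i, z i j • A (x j.1 - x (j.1 + 1))‖ ≤
        ‖(A (x i) - b) - ∑ j : Fin i, y j • A (x j.1 - x (j.1 + 1))‖)
    (hupd : ∀ i : ℕ, 1 ≤ i →
      x (i + 1) = x i - (∑ j : Fin i, z i j • (x j.1 - x (j.1 + 1)) +
        ((A (x i) - b) - ∑ j : Fin i, z i j • A (x j.1 - x (j.1 + 1)))))
    (xG : ℕ → EuclideanSpace ℝ (Fin N))
    (hGmem : ∀ j : ℕ, xG j - x 0 ∈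
      Submodule.span ℝ (Set.range fun k : Fin j => (A ^ k.1) (A (x 0) - b)))
    (hGmin : ∀ j : ℕ, ∀ u : EuclideanSpace ℝ (Fin N),
      u - x 0 ∈ Submodule.span ℝ (Set.range fun k : Fin j => (A ^ k.1) (A (x 0) - b)) →
      ‖A (xG j) - b‖ ≤ ‖A u - b‖)
    (n : ℕ) (hn : 0 < n)
    (hne : A (xG (n - 1)) - b ≠ 0)
    (hdec : ∀ j : ℕ, 0 < j → j < n → ‖A (xG j) - b‖ < ‖A (xG (j - 1)) - b‖) :
    x (n + 1) = xG n - A (xG n) + b := by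
  classical
  -- notation
  have hGmem' : ∀ j : ℕ, xG j - x 0 ∈ kry A (A (x 0) - b) j := hGmem
  have hGmin' : ∀ j : ℕ, ∀ u, u - x 0 ∈ kry A (A (x 0) - b) j →
      ‖A (xG j) - b‖ ≤ ‖A u - b‖ := hGmin
  -- residual identity
  have hrGdef : ∀ j : ℕ, A (xG j) - b = (A (x 0) - b) + A (xG j - x 0) := by
    intro j; rw [map_sub]; abel
  -- monotonicity of residual norms
  have hresmono : ∀ {i j : ℕ}, i ≤ j → ‖A (xG j) - b‖ ≤ ‖A (xG i) - b‖ := by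
    intro i j h
    exact hGmin' j (xG i) (kry_mono A _ h (hGmem' i))
  -- residuals before n are nonzero
  have hrGne : ∀ i : ℕ, i ≤ n - 1 → A (xG i) - b ≠ 0 := by
    intro i hi h0
    apply hne
    have h1 := hresmono hi
    rw [h0, norm_zero] at h1
    exact norm_eq_zero.mp (le_antisymm h1 (norm_nonneg _))
  -- uniqueness of the GMRES minimizer
  have huniq : ∀ (i : ℕ) (u : EuclideanSpace ℝ (Fin N)),
      u - x 0 ∈ kry A (A (x 0) - b) i →
      (∀ u', u' - x 0 ∈ kry A (A (x 0) - b) i → ‖A u - b‖ ≤ ‖A u' - b‖) →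
      u = xG i := by
    intro i u hu hm
    have h1 : ‖A u - b‖ = ‖A (xG i) - b‖ :=
      le_antisymm (hm _ (hGmem' i)) (hGmin' i u hu)
    have hmidmem : ((1/2 : ℝ) • (u + xG i)) - x 0 ∈ kry A (A (x 0) - b) i := by
      have e : ((1/2 : ℝ) • (u + xG i)) - x 0
          = (1/2 : ℝ) • ((u - x 0) + (xG i - x 0)) := by module
      rw [e]
      exact Submodule.smul_mem _ _ (Submodule.add_mem _ hu (hGmem' i))
    have hmid := hm _ hmidmem
    have hAmid : A ((1/2 : ℝ) • (u + xG i)) - b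
        = (1/2 : ℝ) • ((A u - b) + (A (xG i) - b)) := by
      rw [map_smul, map_add]; module
    rw [hAmid, norm_smul] at hmid
    rw [show ‖((1:ℝ)/2)‖ = 1/2 by rw [Real.norm_eq_abs]; norm_num] at hmid
    have h2 : 2 * ‖A u - b‖ ≤ ‖(A u - b) + (A (xG i) - b)‖ := by linarith
    have h3 := norm_min_unique h1 h2
    exact hA.1 (sub_left_inj.mp h3)
  -- telescoping sum
  have htel : ∀ i : ℕ, (∑ j ∈ Finset.range i, (x j - x (j + 1))) = x 0 - x i := by
    intro i
    induction i with
    | zero => simp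
    | succ m ih => rw [Finset.sum_range_succ, ih]; abel
  have htelF : ∀ i : ℕ, (∑ j : Fin i, (x j.1 - x (j.1 + 1))) = x 0 - x i := by
    intro i
    rw [Fin.sum_univ_eq_sum_range (fun j => x j - x (j + 1)) i]
    exact htel i
  have hx0xi : ∀ i : ℕ, x 0 - x i ∈
      Submodule.span ℝ (Set.range fun j : Fin i => x j.1 - x (j.1 + 1)) := by
    intro i
    rw [← htelF i]
    exact Submodule.sum_mem _ fun j _ => Submodule.subset_span ⟨j, rfl⟩
  -- main step: if the NKA vectors span the Krylov space, the next iterate is computed from GMRES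
  have hstep : ∀ i : ℕ, 1 ≤ i →
      Submodule.span ℝ (Set.range fun j : Fin i => x j.1 - x (j.1 + 1))
        = kry A (A (x 0) - b) i →
      x (i + 1) = xG i - (A (xG i) - b) ∧ x i - xG i ∈ kry A (A (x 0) - b) i := by
    intro i hi hsp
    set xb := x i - ∑ j : Fin i, z i j • (x j.1 - x (j.1 + 1)) with hxb
    have hsum : (∑ j : Fin i, z i j • (x j.1 - x (j.1 + 1))) ∈
        Submodule.span ℝ (Set.range fun j : Fin i => x j.1 - x (j.1 + 1)) :=
      Submodule.sum_mem _ fun j _ => Submodule.smul_mem _ _ (Submodule.subset_span ⟨j, rfl⟩)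
    have hxbm : xb - x 0 ∈ kry A (A (x 0) - b) i := by
      rw [← hsp]
      have e1 : xb - x 0 = (x i - x 0) - ∑ j : Fin i, z i j • (x j.1 - x (j.1 + 1)) := by
        rw [hxb]; abel
      have h1 : x i - x 0 ∈
          Submodule.span ℝ (Set.range fun j : Fin i => x j.1 - x (j.1 + 1)) := by
        have := Submodule.neg_mem _ (hx0xi i)
        rwa [neg_sub] at this
      rw [e1]
      exact Submodule.sub_mem _ h1 hsum
    have hxbA : A xb - b = (A (x i) - b) - ∑ j : Fin i, z i j • A (x j.1 - x (j.1 + 1)) := by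
      rw [hxb, map_sub, map_sum]
      simp only [map_smul]
      abel
    have hxbmin : ∀ u', u' - x 0 ∈ kry A (A (x 0) - b) i → ‖A xb - b‖ ≤ ‖A u' - b‖ := by
      intro u' hu'
      rw [← hsp] at hu'
      obtain ⟨c, hc⟩ := (mem_span_range_iff_exists_fun ℝ).mp hu'
      have hu'' : u' - x i = ∑ j : Fin i, (c j + 1) • (x j.1 - x (j.1 + 1)) := by
        have e2 : u' - x i = (u' - x 0) + (x 0 - x i) := by abel
        rw [e2, ← hc, ← htelF i, ← Finset.sum_add_distrib]
        exact Finset.sum_congr rfl fun j _ => by rw [add_smul, one_smul]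
      have hAu' : A u' - b
          = (A (x i) - b) - ∑ j : Fin i, (-(c j + 1)) • A (x j.1 - x (j.1 + 1)) := by
        have e3 : A u' - b = (A (x i) - b) + A (u' - x i) := by rw [map_sub]; abel
        rw [e3, hu'', map_sum]
        simp only [map_smul, neg_smul, Finset.sum_neg_distrib]
        abel
      rw [hxbA, hAu']
      exact hmin i hi _
    have hxbeq : xb = xG i := huniq i xb hxbm hxbmin
    constructor
    · rw [hupd i hi]
      have e4 : x i - (∑ j : Fin i, z i j • (x j.1 - x (j.1 + 1)) +
          ((A (x i) - b) - ∑ j : Fin i, z i j • A (x j.1 - x (j.1 + 1))))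
          = xb - ((A (x i) - b) - ∑ j : Fin i, z i j • A (x j.1 - x (j.1 + 1))) := by
        rw [hxb]; abel
      rw [e4, ← hxbA, hxbeq]
    · have e5 : x i - xG i = ∑ j : Fin i, z i j • (x j.1 - x (j.1 + 1)) := by
        rw [← hxbeq, hxb]; abel
      rw [e5, ← hsp]
      exact hsum
  -- the residual is not in the Krylov space (key nondegeneracy)
  have hnotin : ∀ i : ℕ, 1 ≤ i → i < n → A (xG i) - b ∉ kry A (A (x 0) - b) i := by
    intro i h1 h2 hmem
    obtain ⟨m, rfl⟩ : ∃ m, i = m + 1 := ⟨i - 1, by omega⟩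
    rw [kry_succ_sup_map] at hmem
    rw [Submodule.mem_sup] at hmem
    obtain ⟨y, hy, w', hw', hsum⟩ := hmem
    rw [Submodule.mem_span_singleton] at hy
    obtain ⟨c, rfl⟩ := hy
    obtain ⟨w, hw, rfl⟩ := hw'
    by_cases hc : c = 1
    · -- stagnation: contradicts strict decrease
      subst hc
      have hmem' : (x 0 + w) - x 0 ∈ kry A (A (x 0) - b) m := by simpa using hw
      have h3 := hGmin' m (x 0 + w) hmem'
      have h4 : A (x 0 + w) - b = A (xG (m + 1)) - b := by
        rw [map_add, ← hsum, one_smul, ContinuousLinearMap.coe_coe]; abel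
      rw [h4] at h3
      have h5 := hdec (m + 1) (Nat.succ_pos m) h2
      simp only [Nat.add_sub_cancel] at h5
      linarith
    · -- exact solution found: residual is zero, contradiction
      have hr0 : (A (x 0) - b) = (1 - c)⁻¹ • A (w - (xG (m + 1) - x 0)) := by
        have e6 : (1 - c) • (A (x 0) - b) = A (w - (xG (m + 1) - x 0)) := by
          have e7 := hrGdef (m + 1)
          rw [← hsum] at e7
          rw [map_sub]
          linear_combination (norm := module) -e7
        rw [← e6, smul_smul, inv_mul_cancel₀ (sub_ne_zero.mpr (Ne.symm hc)), one_smul]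
      have hv' : (x 0 - (1 - c)⁻¹ • (w - (xG (m + 1) - x 0))) - x 0 ∈ kry A (A (x 0) - b) (m + 1) := by
        have : (x 0 - (1 - c)⁻¹ • (w - (xG (m + 1) - x 0))) - x 0
            = -((1 - c)⁻¹ • (w - (xG (m + 1) - x 0))) := by abel
        rw [this]
        exact Submodule.neg_mem _ (Submodule.smul_mem _ _
          (Submodule.sub_mem _ (kry_mono A _ (Nat.le_succ m) hw) (hGmem' (m + 1))))
      have h6 := hGmin' (m + 1) _ hv'
      have h7 : A (x 0 - (1 - c)⁻¹ • (w - (xG (m + 1) - x 0))) - b = 0 := by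
        rw [map_sub, map_smul]
        rw [show A (x 0) - (1 - c)⁻¹ • A (w - (xG (m + 1) - x 0)) - b
            = (A (x 0) - b) - (1 - c)⁻¹ • A (w - (xG (m + 1) - x 0)) from by abel]
        rw [hr0]; abel
      rw [h7, norm_zero] at h6
      exact hrGne (m + 1) (by omega) (norm_eq_zero.mp (le_antisymm h6 (norm_nonneg _)))
  -- the span equality, by induction
  have hspan : ∀ i : ℕ, 1 ≤ i → i ≤ n →
      Submodule.span ℝ (Set.range fun j : Fin i => x j.1 - x (j.1 + 1))
        = kry A (A (x 0) - b) i := by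
    intro i
    induction i with
    | zero => omega
    | succ m ih =>
      intro _ hle
      rcases Nat.eq_zero_or_pos m with hm | hm
      · subst hm
        have hv0 : x 0 - x 1 = A (x 0) - b := by rw [hx1]; abel
        apply le_antisymm
        · rw [Submodule.span_le]
          rintro _ ⟨⟨jv, hjv⟩, rfl⟩
          have hj : jv = 0 := by omega
          subst hj
          show x 0 - x 1 ∈ _
          rw [hv0]
          exact r_mem_kry A _ 0
        · rw [Submodule.span_le]
          rintro _ ⟨⟨kv, hkv⟩, rfl⟩
          have hk : kv = 0 := by omega
          subst hk
          show (A ^ 0) (A (x 0) - b) ∈ _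
          rw [pow_zero]
          show A (x 0) - b ∈ _
          rw [← hv0]
          exact Submodule.subset_span ⟨0, rfl⟩
      · have hsp := ih hm (le_trans (Nat.le_succ m) hle)
        obtain ⟨hx', hxK⟩ := hstep m hm hsp
        have hvm : x m - x (m + 1) = (x m - xG m) + (A (xG m) - b) := by
          rw [hx']; abel
        have hrGK : A (xG m) - b ∈ kry A (A (x 0) - b) (m + 1) := by
          rw [hrGdef m]
          exact Submodule.add_mem _ (r_mem_kry A _ m) (apply_mem_kry A _ m (hGmem' m))
        have hni : A (xG m) - b ∉ kry A (A (x 0) - b) m := hnotin m hm (by omega)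
        have hKmS : kry A (A (x 0) - b) m ≤
            Submodule.span ℝ (Set.range fun j : Fin (m + 1) => x j.1 - x (j.1 + 1)) := by
          rw [← hsp]
          apply Submodule.span_mono
          rintro _ ⟨j, rfl⟩
          exact ⟨⟨j.1, by omega⟩, rfl⟩
        have hS : Submodule.span ℝ (Set.range fun j : Fin (m + 1) => x j.1 - x (j.1 + 1))
            = kry A (A (x 0) - b) m ⊔ Submodule.span ℝ {A (xG m) - b} := by
          apply le_antisymm
          · rw [Submodule.span_le]
            rintro _ ⟨j, rfl⟩
            by_cases hj : j.1 < m
            · exact Submodule.mem_sup_left (hsp ▸ Submodule.subset_span ⟨⟨j.1, hj⟩, rfl⟩)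
            · have hj' : j.1 = m := by omega
              show x j.1 - x (j.1 + 1) ∈ _
              rw [hj', hvm]
              exact Submodule.add_mem _ (Submodule.mem_sup_left hxK)
                (Submodule.mem_sup_right (Submodule.mem_span_singleton_self _))
          · apply sup_le hKmS
            rw [Submodule.span_le, Set.singleton_subset_iff]
            have e8 : A (xG m) - b = (x m - x (m + 1)) - (x m - xG m) := by
              rw [hvm]; abel
            rw [e8]
            exact Submodule.sub_mem _
              (Submodule.subset_span ⟨⟨m, lt_add_one m⟩, rfl⟩) (hKmS hxK)
        rw [hS]
        apply Submodule.eq_of_le_of_finrank_le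
        · exact sup_le (kry_mono A _ (Nat.le_succ m))
            ((Submodule.span_singleton_le_iff_mem _ _).mpr hrGK)
        · have hlt : kry A (A (x 0) - b) m
              < kry A (A (x 0) - b) m ⊔ Submodule.span ℝ {A (xG m) - b} := by
            refine lt_of_le_of_ne le_sup_left fun h => hni ?_
            rw [h]
            exact Submodule.mem_sup_right (Submodule.mem_span_singleton_self _)
          have hfr1 := Submodule.finrank_lt_finrank_of_lt hlt
          have hfr2 : finrank ℝ (kry A (A (x 0) - b) (m + 1)) ≤
              finrank ℝ (kry A (A (x 0) - b) m) + 1 := by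
            rw [kry_succ_sup_last]
            calc finrank ℝ ((kry A (A (x 0) - b) m ⊔
                Submodule.span ℝ {(A ^ m) (A (x 0) - b)} : Submodule ℝ _))
                ≤ finrank ℝ (kry A (A (x 0) - b) m) +
                  finrank ℝ (Submodule.span ℝ {(A ^ m) (A (x 0) - b)} : Submodule ℝ _) :=
                  Submodule.finrank_add_le_finrank_add_finrank _ _
              _ ≤ finrank ℝ (kry A (A (x 0) - b) m) + 1 := by
                  have := finrank_span_singleton_le' ((A ^ m) (A (x 0) - b))
                  omega
          omega
  -- conclude
  have hfin := (hstep n hn (hspan n hn le_rfl)).1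
  rw [hfin]; abel
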